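/- For the Simpson–Martin-Moruno–Visser metric, the curvature invariant combination evaluated at r = 0 satisfies (2Λ - W_0)|_{r=0} = (2m - c)/(2c^3), where W_0 = -(3m(c^2 - 2r^2) sqrt(r^2+c^2) - 2c^4 - 2c^2 r^2)/(6(r^2+c^2)^3) and Λ = (3m - sqrt(r^2+c^2)) c^2 / (12 sqrt(r^2+c^2)(r^2+c^2)^2). Consequently (2Λ - W_0)|_{r=0} is negative, zero, or positive according as 2m < c, 2m = c, or 2m > c. -/
import Mathlib


/-- for the SMV metric, `(2Λ - W_0)|_{r=0} = (2m - c)/(2c^3)`, with the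
sign trichotomy according as `2m < c`, `2m = c`, `2m > c`. -/
theorem stmt7 (c m : ℝ) (hc : 0 < c) :
    let r : ℝ := 0
    let W0 := -(3 * m * (c ^ 2 - 2 * r ^ 2) * Real.sqrt (r ^ 2 + c ^ 2)
        - 2 * c ^ 4 - 2 * c ^ 2 * r ^ 2) / (6 * (r ^ 2 + c ^ 2) ^ 3)
    let Λ := (3 * m - Real.sqrt (r ^ 2 + c ^ 2)) * c ^ 2 /
        (12 * Real.sqrt (r ^ 2 + c ^ 2) * (r ^ 2 + c ^ 2) ^ 2)
    2 * Λ - W0 = (2 * m - c) / (2 * c ^ 3) ∧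
      (2 * Λ - W0 < 0 ↔ 2 * m < c) ∧
      (2 * Λ - W0 = 0 ↔ 2 * m = c) ∧
      (0 < 2 * Λ - W0 ↔ c < 2 * m) := by
  intro r W0 Λ
  have hs : Real.sqrt (r ^ 2 + c ^ 2) = c := by
    simp [r, Real.sqrt_sq hc.le]
  have hc' : c ≠ 0 := hc.ne'
  have key : 2 * Λ - W0 = (2 * m - c) / (2 * c ^ 3) := by
    simp only [W0, Λ, hs, r]
    field_simp
    ring
  refine ⟨key, ?_, ?_, ?_⟩
  · rw [key]
    rw [div_neg_iff]
    constructor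
    · rintro (⟨h, h2⟩ | ⟨_, h⟩)
      · nlinarith [pow_pos hc 3]
      · nlinarith [pow_pos hc 3]
    · intro h
      exact Or.inr ⟨by linarith, by positivity⟩
  · rw [key, div_eq_zero_iff]
    constructor
    · rintro (h | h)
      · linarith
      · nlinarith [pow_pos hc 3]
    · intro h; exact Or.inl (by linarith)
  · rw [key, lt_div_iff₀ (by positivity)]
    constructor <;> intro h <;> linarith
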